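/- arXiv:1706.08020 — 5 statements merged into one kernel-verified Lean document; each statement's English description precedes it below -/
import Mathlib

section
/- Let A and B be p×p real matrices and suppose ‖A − B‖_max ≤ C₁√(log p / n) for some C₁ > 0. Let t = K√(log p / n) with K > C₁, and let τ_t denote entrywise hard thresholding. If B belongs to the class U(q, s_p, M) (so every row of B satisfies ∑_j |b_{ij}|^q ≤ s_p), then there is a constant C₂ depending only on C₁, K, q such that the spectral norm satisfies ‖τ_t(A) − B‖ ≤ C₂ s_p (log p / n)^{(1−q)/2}. -/
open scoped BigOperators

noncomputable def spec {p : ℕ} (A : Matrix (Fin p) (Fin p) ℝ) : ℝ :=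
  ‖Matrix.toEuclideanCLM (𝕜 := ℝ) (n := Fin p) A‖

/-- Entrywise hard-thresholding operator. -/
noncomputable def tau {p : ℕ} (t : ℝ) (A : Matrix (Fin p) (Fin p) ℝ) : Matrix (Fin p) (Fin p) ℝ :=
  Matrix.of fun i j => if t < |A i j| then A i j else 0

lemma schur {p : ℕ} (D : Matrix (Fin p) (Fin p) ℝ) (r : ℝ) (hr : 0 ≤ r)
    (hrow : ∀ i, ∑ j, |D i j| ≤ r) (hcol : ∀ j, ∑ i, |D i j| ≤ r) :
    spec D ≤ r := by
  unfold spec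
  apply ContinuousLinearMap.opNorm_le_bound _ hr
  intro x
  have hx : ∀ i, (Matrix.toEuclideanCLM (𝕜 := ℝ) (n := Fin p) D x) i = ∑ j, D i j * x j := by
    intro i
    have := congrFun (Matrix.ofLp_toEuclideanCLM (𝕜 := ℝ) D x) i
    simpa [Matrix.toLin'_apply, Matrix.mulVec, dotProduct] using this
  rw [EuclideanSpace.norm_eq]
  have hxnorm : ‖x‖ = Real.sqrt (∑ j, (x j)^2) := by
    rw [EuclideanSpace.norm_eq]
    congr 1
    exact Finset.sum_congr rfl fun j _ => by rw [Real.norm_eq_abs, sq_abs]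
  rw [hxnorm, ← Real.sqrt_sq hr, ← Real.sqrt_mul (sq_nonneg r)]
  apply Real.sqrt_le_sqrt
  have key : ∀ i, (∑ j, D i j * x j)^2 ≤ r * ∑ j, |D i j| * (x j)^2 := by
    intro i
    have h1 : (∑ j, D i j * x j)^2 ≤ (∑ j, |D i j| * |x j|)^2 := by
      apply sq_le_sq'
      · rw [← Finset.sum_neg_distrib]
        apply Finset.sum_le_sum
        intro j _
        nlinarith [abs_nonneg (D i j), abs_nonneg (x j), neg_abs_le (D i j * x j), abs_mul (D i j) (x j)]
      · apply Finset.sum_le_sum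
        intro j _
        calc D i j * x j ≤ |D i j * x j| := le_abs_self _
          _ = |D i j| * |x j| := abs_mul _ _
    have h2 : (∑ j, |D i j| * |x j|)^2 ≤ (∑ j, |D i j|) * (∑ j, |D i j| * (x j)^2) := by
      apply Finset.sum_sq_le_sum_mul_sum_of_sq_eq_mul
      · intro j _; exact abs_nonneg _
      · intro j _; positivity
      · intro j _
        rw [mul_pow, sq_abs (x j)]
        ring
    calc (∑ j, D i j * x j)^2 ≤ (∑ j, |D i j| * |x j|)^2 := h1
      _ ≤ (∑ j, |D i j|) * (∑ j, |D i j| * (x j)^2) := h2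
      _ ≤ r * (∑ j, |D i j| * (x j)^2) := by
          apply mul_le_mul_of_nonneg_right (hrow i)
          positivity
  calc ∑ i, ‖(Matrix.toEuclideanCLM (𝕜 := ℝ) (n := Fin p) D x) i‖^2
      = ∑ i, (∑ j, D i j * x j)^2 := by
        refine Finset.sum_congr rfl fun i _ => ?_
        rw [hx i, Real.norm_eq_abs, sq_abs]
    _ ≤ ∑ i, r * ∑ j, |D i j| * (x j)^2 := Finset.sum_le_sum fun i _ => key i
    _ = r * ∑ j, (x j)^2 * ∑ i, |D i j| := by
        rw [← Finset.mul_sum, Finset.sum_comm]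
        congr 1
        refine Finset.sum_congr rfl fun j _ => ?_
        rw [Finset.mul_sum]
        exact Finset.sum_congr rfl fun i _ => by ring
    _ ≤ r * ∑ j, (x j)^2 * r := by
        apply mul_le_mul_of_nonneg_left _ hr
        exact Finset.sum_le_sum fun j _ => mul_le_mul_of_nonneg_left (hcol j) (sq_nonneg _)
    _ = r^2 * ∑ j, (x j)^2 := by rw [← Finset.sum_mul]; ring

theorem stmt0 (C₁ K q : ℝ) (hC₁ : 0 < C₁) (hK : C₁ < K) (hq0 : 0 ≤ q) (hq1 : q ≤ 1) :
    ∃ C₂ : ℝ, ∀ (p n : ℕ), 0 < p → 0 < n →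
      ∀ (sp M : ℝ), 0 < sp → 0 < M →
      ∀ (A B : Matrix (Fin p) (Fin p) ℝ),
        B.PosDef →
        (∀ i, B i i ≤ M) →
        (∀ i, ∑ j, |B i j| ^ q ≤ sp) →
        (∀ i j, |A i j - B i j| ≤ C₁ * Real.sqrt (Real.log p / n)) →
        spec (tau (K * Real.sqrt (Real.log p / n)) A - B)
          ≤ C₂ * sp * (Real.log p / n) ^ ((1 - q) / 2) := by
  have hKC : (0:ℝ) < K - C₁ := sub_pos.2 hK
  refine ⟨C₁ / (K - C₁) ^ q + (K + C₁) ^ ((1:ℝ) - q), ?_⟩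
  set c := C₁ / (K - C₁) ^ q + (K + C₁) ^ ((1:ℝ) - q) with hc
  have hd0 : 0 ≤ C₁ / (K - C₁) ^ q := le_of_lt (div_pos hC₁ (Real.rpow_pos_of_pos hKC q))
  have he0 : (0:ℝ) ≤ (K + C₁) ^ ((1:ℝ) - q) := Real.rpow_nonneg (by linarith) _
  have hc0 : 0 ≤ c := by rw [hc]; linarith
  intro p n hp hn sp M hsp hM A B hB hdiag hrows hAB
  set x := Real.log p / n with hxdef
  have hx0 : 0 ≤ x := div_nonneg (Real.log_nonneg (by exact_mod_cast hp)) (Nat.cast_nonneg n)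
  set ε := Real.sqrt x with hε
  have hε0 : 0 ≤ ε := Real.sqrt_nonneg _
  have hεq : 0 ≤ ε ^ ((1:ℝ) - q) := Real.rpow_nonneg hε0 _
  have hBq0 : ∀ i j, (0:ℝ) ≤ |B i j| ^ q := fun i j => Real.rpow_nonneg (abs_nonneg _) _
  have hsym : ∀ i j, B i j = B j i := by
    intro i j
    have := congrFun (congrFun hB.isHermitian j) i
    simpa using this
  -- entrywise bound
  have key : ∀ i j, |(tau (K * ε) A - B) i j| ≤ c * ε ^ ((1:ℝ) - q) * |B i j| ^ q := by
    intro i j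
    have hRHS0 : 0 ≤ c * ε ^ ((1:ℝ) - q) * |B i j| ^ q :=
      mul_nonneg (mul_nonneg hc0 hεq) (hBq0 i j)
    have hDij : (tau (K * ε) A - B) i j
        = (if K * ε < |A i j| then A i j else 0) - B i j := rfl
    rcases eq_or_lt_of_le hε0 with hε0' | hεpos
    · -- ε = 0
      have hAB' : A i j = B i j := by
        have h := hAB i j
        rw [← hε0', mul_zero] at h
        have := abs_nonneg (A i j - B i j)
        have h0 : |A i j - B i j| = 0 := le_antisymm h this
        have := abs_eq_zero.mp h0
        linarith [sub_eq_zero.mp this]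
      have hentry : (tau (K * ε) A - B) i j = 0 := by
        rw [hDij]
        by_cases h : K * ε < |A i j|
        · rw [if_pos h, hAB', sub_self]
        · rw [if_neg h, zero_sub, neg_eq_zero]
          push_neg at h
          rw [← hε0', mul_zero] at h
          have hA0 : A i j = 0 := abs_eq_zero.mp (le_antisymm h (abs_nonneg _))
          rw [← hAB', hA0]
      rw [hentry, abs_zero]
      exact hRHS0
    · -- ε > 0
      by_cases h : K * ε < |A i j|
      · -- kept entry
        rw [hDij, if_pos h]
        have hABij := hAB i j
        have hBlow : (K - C₁) * ε ≤ |B i j| := by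
          have h1 := abs_sub_abs_le_abs_sub (A i j) (B i j)
          nlinarith
        have hBq : ((K - C₁) * ε) ^ q ≤ |B i j| ^ q :=
          Real.rpow_le_rpow (by positivity) hBlow hq0
        have hpow : ε ^ ((1:ℝ) - q) * ε ^ q = ε := by
          rw [← Real.rpow_add hεpos]
          norm_num
        have hne : (K - C₁) ^ q ≠ 0 := ne_of_gt (Real.rpow_pos_of_pos hKC q)
        have hcalc : C₁ * ε = C₁ / (K - C₁) ^ q * ε ^ ((1:ℝ) - q) * ((K - C₁) * ε) ^ q := by
          rw [Real.mul_rpow (le_of_lt hKC) hε0]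
          field_simp
          linear_combination -hpow
        calc |A i j - B i j| ≤ C₁ * ε := hABij
          _ = C₁ / (K - C₁) ^ q * ε ^ ((1:ℝ) - q) * ((K - C₁) * ε) ^ q := hcalc
          _ ≤ C₁ / (K - C₁) ^ q * ε ^ ((1:ℝ) - q) * |B i j| ^ q :=
              mul_le_mul_of_nonneg_left hBq (mul_nonneg hd0 hεq)
          _ ≤ c * ε ^ ((1:ℝ) - q) * |B i j| ^ q := by
              have hcc : C₁ / (K - C₁) ^ q ≤ c := by rw [hc]; linarith
              exact mul_le_mul_of_nonneg_right
                (mul_le_mul_of_nonneg_right hcc hεq) (hBq0 i j)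
      · -- zeroed entry
        rw [hDij, if_neg h, zero_sub, abs_neg]
        push_neg at h
        have hABij := hAB i j
        have hBup : |B i j| ≤ (K + C₁) * ε := by
          have h1 := abs_sub_abs_le_abs_sub (B i j) (A i j)
          rw [abs_sub_comm] at h1
          linarith
        have hsplit : |B i j| = |B i j| ^ ((1:ℝ) - q) * |B i j| ^ q := by
          rw [← Real.rpow_add' (abs_nonneg _) (by norm_num)]
          norm_num
        have h1 : |B i j| ^ ((1:ℝ) - q) ≤ ((K + C₁) * ε) ^ ((1:ℝ) - q) :=
          Real.rpow_le_rpow (abs_nonneg _) hBup (by linarith)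
        calc |B i j| = |B i j| ^ ((1:ℝ) - q) * |B i j| ^ q := hsplit
          _ ≤ ((K + C₁) * ε) ^ ((1:ℝ) - q) * |B i j| ^ q :=
              mul_le_mul_of_nonneg_right h1 (hBq0 i j)
          _ = (K + C₁) ^ ((1:ℝ) - q) * ε ^ ((1:ℝ) - q) * |B i j| ^ q := by
              rw [Real.mul_rpow (by linarith) hε0]
          _ ≤ c * ε ^ ((1:ℝ) - q) * |B i j| ^ q := by
              have hle : (K + C₁) ^ ((1:ℝ) - q) ≤ c := by rw [hc]; linarith
              exact mul_le_mul_of_nonneg_right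
                (mul_le_mul_of_nonneg_right hle hεq) (hBq0 i j)
  -- row and column sums
  have hr0 : 0 ≤ c * ε ^ ((1:ℝ) - q) * sp :=
    mul_nonneg (mul_nonneg hc0 hεq) (le_of_lt hsp)
  have hrow : ∀ i, ∑ j, |(tau (K * ε) A - B) i j| ≤ c * ε ^ ((1:ℝ) - q) * sp := by
    intro i
    calc ∑ j, |(tau (K * ε) A - B) i j| ≤ ∑ j, c * ε ^ ((1:ℝ) - q) * |B i j| ^ q :=
          Finset.sum_le_sum fun j _ => key i j
      _ = c * ε ^ ((1:ℝ) - q) * ∑ j, |B i j| ^ q := by rw [Finset.mul_sum]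
      _ ≤ c * ε ^ ((1:ℝ) - q) * sp :=
          mul_le_mul_of_nonneg_left (hrows i) (mul_nonneg hc0 hεq)
  have hcol : ∀ j, ∑ i, |(tau (K * ε) A - B) i j| ≤ c * ε ^ ((1:ℝ) - q) * sp := by
    intro j
    calc ∑ i, |(tau (K * ε) A - B) i j| ≤ ∑ i, c * ε ^ ((1:ℝ) - q) * |B i j| ^ q :=
          Finset.sum_le_sum fun i _ => key i j
      _ = c * ε ^ ((1:ℝ) - q) * ∑ i, |B j i| ^ q := by
          rw [Finset.mul_sum]
          exact Finset.sum_congr rfl fun i _ => by rw [hsym i j]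
      _ ≤ c * ε ^ ((1:ℝ) - q) * sp :=
          mul_le_mul_of_nonneg_left (hrows j) (mul_nonneg hc0 hεq)
  have hmain := schur (tau (K * ε) A - B) (c * ε ^ ((1:ℝ) - q) * sp) hr0 hrow hcol
  have hεx : ε ^ ((1:ℝ) - q) = x ^ ((1 - q) / 2) := by
    rw [hε, Real.sqrt_eq_rpow, ← Real.rpow_mul hx0]
    congr 1
    ring
  calc spec (tau (K * ε) A - B) ≤ c * ε ^ ((1:ℝ) - q) * sp := hmain
    _ = c * sp * x ^ ((1 - q) / 2) := by rw [hεx]; ring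
end

section
/- Let B be a p×p symmetric positive semidefinite matrix with trace p and ‖B‖_max ≤ b_max, and let A be a p×p symmetric positive semidefinite matrix with ‖A − B‖_max < ε ≤ 1/2. Then ‖(p/tr(A))·A − B‖_max ≤ 2(1 + b_max)·ε. -/
open scoped BigOperators

lemma psd_diag_nonneg {p : ℕ} (A : Matrix (Fin p) (Fin p) ℝ) (hA : A.PosSemidef) (i : Fin p) :
    0 ≤ A i i := by
  have := hA.dotProduct_mulVec_nonneg (Pi.single i 1)
  simpa [dotProduct, Matrix.mulVec, Pi.single_apply, Finset.sum_ite_eq] using this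

lemma psd_abs_apply {p : ℕ} (A : Matrix (Fin p) (Fin p) ℝ) (hA : A.PosSemidef) (i j : Fin p) :
    |A i j| ≤ (A i i + A j j) / 2 := by
  rcases eq_or_ne i j with rfl | hij
  · rw [abs_of_nonneg (psd_diag_nonneg A hA i)]; ring_nf; simp
  have hsym : A j i = A i j := by simpa using hA.1.apply i j
  set x : Fin p → ℝ := Pi.single i 1 + Pi.single j 1 with hx
  set y : Fin p → ℝ := Pi.single i 1 - Pi.single j 1 with hy
  have h1 := hA.dotProduct_mulVec_nonneg x
  have h2 := hA.dotProduct_mulVec_nonneg y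
  have e1 : dotProduct x (A.mulVec x) = A i i + A i j + A j i + A j j := by
    simp [hx, dotProduct, Matrix.mulVec, Pi.single_apply, mul_add, add_mul,
      Finset.sum_add_distrib, Finset.mul_sum, hij, hij.symm, ite_and]
    ring
  have e2 : dotProduct y (A.mulVec y) = A i i - A i j - A j i + A j j := by
    simp [hy, dotProduct, Matrix.mulVec, Pi.single_apply, mul_sub, sub_mul, mul_add, add_mul,
      Finset.sum_sub_distrib, Finset.mul_sum, hij, hij.symm, ite_and]
    ring
  simp only [star_trivial] at h1 h2
  rw [e1] at h1; rw [e2] at h2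
  rw [abs_le]
  constructor <;> nlinarith [hsym]

theorem stmt1 {p : ℕ} (hp : 0 < p) (b_max ε : ℝ) (hε : ε ≤ 1 / 2)
    (A B : Matrix (Fin p) (Fin p) ℝ)
    (hB : B.PosSemidef) (hBtr : B.trace = p) (hBmax : ∀ i j, |B i j| ≤ b_max)
    (hA : A.PosSemidef) (hAB : ∀ i j, |A i j - B i j| < ε) :
    ∀ i j, |(((p : ℝ) / A.trace) • A - B) i j| ≤ 2 * (1 + b_max) * ε := by
  have hε0 : 0 < ε := lt_of_le_of_lt (abs_nonneg _) (hAB ⟨0, hp⟩ ⟨0, hp⟩)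
  have hp' : (0:ℝ) < p := by exact_mod_cast hp
  have htr : |A.trace - (p:ℝ)| ≤ p * ε := by
    have h : A.trace - (p:ℝ) = ∑ i, (A i i - B i i) := by
      rw [← hBtr]; simp [Matrix.trace, Matrix.diag, Finset.sum_sub_distrib]
    rw [h]
    calc |∑ i, (A i i - B i i)| ≤ ∑ i, |A i i - B i i| := Finset.abs_sum_le_sum_abs _ _
      _ ≤ ∑ _i : Fin p, ε := Finset.sum_le_sum (fun i _ => (hAB i i).le)
      _ = p * ε := by simp [mul_comm]
  have htr2 : (p:ℝ)/2 ≤ A.trace := by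
    have := abs_le.mp htr; nlinarith
  have htr0 : (0:ℝ) < A.trace := by nlinarith
  intro i j
  have hAij : |A i j| ≤ b_max + ε := by
    have h1 := psd_abs_apply A hA i j
    have h2 : A i i ≤ b_max + ε := by
      nlinarith [(abs_lt.mp (hAB i i)).2, le_abs_self (B i i), hBmax i i]
    have h3 : A j j ≤ b_max + ε := by
      nlinarith [(abs_lt.mp (hAB j j)).2, le_abs_self (B j j), hBmax j j]
    linarith
  have key : ((((p : ℝ) / A.trace) • A - B)) i j
      = (A i j - B i j) + (((p:ℝ) - A.trace)/A.trace) * A i j := by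
    simp only [Matrix.sub_apply, Matrix.smul_apply, smul_eq_mul]
    field_simp
    ring
  rw [key]
  have hq : |((p:ℝ) - A.trace)/A.trace| ≤ 2 * ε := by
    rw [abs_div, abs_of_pos htr0, div_le_iff₀ htr0, abs_sub_comm]
    nlinarith
  calc |(A i j - B i j) + (((p:ℝ) - A.trace)/A.trace) * A i j|
      ≤ |A i j - B i j| + |((p:ℝ) - A.trace)/A.trace| * |A i j| := by
        rw [← abs_mul]; exact abs_add_le _ _
    _ ≤ 2 * (1 + b_max) * ε := by
        have h4 : |((p:ℝ) - A.trace)/A.trace| * |A i j| ≤ (2*ε) * (b_max + ε) :=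
          mul_le_mul hq hAij (abs_nonneg _) (by linarith)
        nlinarith [(hAB i j).le]
end

section
/- Let S be a symmetric positive semidefinite p×p matrix with eigendecomposition having largest eigenvalue d₁, and let β > 0. Then for every nonzero x ∈ ℝ^p, the ratio (xᵀ(S+βI)⁻¹ S (S+βI)⁻¹ x) / (xᵀ(S+βI)⁻¹ x) ≤ d₁/(d₁+β). -/
open Matrix

open scoped BigOperators

lemma quad_le_spec {p : ℕ} (S : Matrix (Fin p) (Fin p) ℝ) (z : Fin p → ℝ) :
    z ⬝ᵥ (S *ᵥ z) ≤ spec S * (z ⬝ᵥ z) := by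
  set z' : EuclideanSpace ℝ (Fin p) := (WithLp.equiv 2 _).symm z with hz'
  have h1 : z ⬝ᵥ (S *ᵥ z) = inner ℝ z' (Matrix.toEuclideanCLM (𝕜 := ℝ) S z') := by
    rw [hz', WithLp.equiv_symm_apply, Matrix.toEuclideanCLM_toLp]
    simp [PiLp.inner_apply, dotProduct, WithLp.equiv, Equiv.refl_apply, mul_comm]
  have h2 : (z ⬝ᵥ z) = ‖z'‖ ^ 2 := by
    rw [← real_inner_self_eq_norm_sq, hz']
    simp [PiLp.inner_apply, dotProduct, WithLp.equiv, Equiv.refl_apply]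
    rw [EuclideanSpace.norm_sq_eq]; simp [sq]
  rw [h1, h2]
  calc inner ℝ z' (Matrix.toEuclideanCLM (𝕜 := ℝ) S z')
      ≤ ‖z'‖ * ‖Matrix.toEuclideanCLM (𝕜 := ℝ) S z'‖ := real_inner_le_norm _ _
    _ ≤ ‖z'‖ * (‖Matrix.toEuclideanCLM (𝕜 := ℝ) S‖ * ‖z'‖) := by
        gcongr; exact ContinuousLinearMap.le_opNorm _ _
    _ = spec S * ‖z'‖ ^ 2 := by rw [spec]; ring

theorem stmt6 {p : ℕ} (S : Matrix (Fin p) (Fin p) ℝ) (hS : S.PosSemidef)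
    (β : ℝ) (hβ : 0 < β) (d₁ : ℝ) (hd₁ : d₁ = spec S)
    (x : Fin p → ℝ) (hx : x ≠ 0) :
    (x ⬝ᵥ (((S + β • 1)⁻¹ * S * (S + β • 1)⁻¹) *ᵥ x)) / (x ⬝ᵥ ((S + β • 1)⁻¹ *ᵥ x))
      ≤ d₁ / (d₁ + β) := by
  set A := S + β • (1 : Matrix (Fin p) (Fin p) ℝ) with hA
  have hone : (β • (1 : Matrix (Fin p) (Fin p) ℝ)).PosDef := by
    refine Matrix.PosDef.of_dotProduct_mulVec_pos ?_ (fun v hv => ?_)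
    · simp [Matrix.IsHermitian, Matrix.conjTranspose_smul]
    · rw [Matrix.smul_mulVec, Matrix.one_mulVec, dotProduct_smul]
      have h : (0:ℝ) < star v ⬝ᵥ v := Matrix.dotProduct_star_self_pos_iff.mpr hv
      exact smul_pos hβ h
  have hApd : A.PosDef := Matrix.PosDef.posSemidef_add hS hone
  have hAinv : A⁻¹.PosDef := hApd.inv
  have hinvertA : IsUnit A.det := (Matrix.isUnit_iff_isUnit_det _).mp hApd.isUnit
  set y := A⁻¹ *ᵥ x with hy
  have hxy : A *ᵥ y = x := by
    rw [hy, Matrix.mulVec_mulVec, Matrix.mul_nonsing_inv _ hinvertA, Matrix.one_mulVec]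
  have hy0 : y ≠ 0 := by
    intro h
    apply hx
    rw [← hxy, h, Matrix.mulVec_zero]
  have hsymm : A⁻¹ᵀ = A⁻¹ := by
    have := hAinv.isHermitian
    simpa [Matrix.IsHermitian] using this
  have hnum : x ⬝ᵥ ((A⁻¹ * S * A⁻¹) *ᵥ x) = y ⬝ᵥ (S *ᵥ y) := by
    rw [← Matrix.mulVec_mulVec, ← Matrix.mulVec_mulVec, Matrix.dotProduct_mulVec x A⁻¹,
      ← Matrix.mulVec_transpose, hsymm, ← hy]
  have hden : x ⬝ᵥ (A⁻¹ *ᵥ x) = y ⬝ᵥ (S *ᵥ y) + β * (y ⬝ᵥ y) := by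
    have h1 : x ⬝ᵥ (A⁻¹ *ᵥ x) = y ⬝ᵥ (A *ᵥ y) := by
      calc x ⬝ᵥ (A⁻¹ *ᵥ x) = x ⬝ᵥ y := by rw [hy]
        _ = (A *ᵥ y) ⬝ᵥ y := by rw [hxy]
        _ = y ⬝ᵥ (A *ᵥ y) := dotProduct_comm _ _
    rw [h1, hA, Matrix.add_mulVec, dotProduct_add, Matrix.smul_mulVec,
      Matrix.one_mulVec, dotProduct_smul, smul_eq_mul]
  -- key quantities
  set a := y ⬝ᵥ (S *ᵥ y) with ha
  set b := y ⬝ᵥ y with hb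
  have hb0 : 0 < b := by
    have : (0:ℝ) < star y ⬝ᵥ y := Matrix.dotProduct_star_self_pos_iff.mpr hy0
    simpa using this
  have ha0 : 0 ≤ a := by
    have := hS.dotProduct_mulVec_nonneg y
    simpa [ha] using this
  have hab : a ≤ d₁ * b := by
    rw [hd₁]; exact quad_le_spec S y
  have hd0 : 0 ≤ d₁ := by rw [hd₁, spec]; positivity
  rw [hnum, hden]
  rw [div_le_div_iff₀ (by positivity) (by positivity)]
  nlinarith [mul_pos hβ hb0]
end

section
/- Let x₁,…,x_n be unit vectors in ℝ^p, α > 0, and suppose Σ is a symmetric positive definite p×p matrix satisfying the regularized TME fixed-point equation Σ = (1/(1+α))·(p/n)·∑_i x_i x_iᵀ/(x_iᵀΣ⁻¹x_i) + (α/(1+α))·I. Let C = (p/n)·‖∑_i x_i x_iᵀ‖ and assume 1 + α > C. Then ‖Σ‖ ≤ (α/(1+α))·1/(1 − C/(1+α)) and moreover ‖Σ − (α/(1+α))I‖ = ‖Σ‖ − α/(1+α) ≤ (C/(1+α))·(α/(1+α))·1/(1 − C/(1+α)). -/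
open Matrix

open scoped BigOperators

set_option synthInstance.maxHeartbeats 1000000
set_option maxHeartbeats 1000000

section Aux

variable {p : ℕ}



noncomputable def emb (v : Fin p → ℝ) : EuclideanSpace ℝ (Fin p) := (WithLp.equiv 2 _).symm v

lemma inner_emb (v w : Fin p → ℝ) : @inner ℝ _ _ (emb v) (emb w) = v ⬝ᵥ w := by
  simp [emb, PiLp.inner_apply, dotProduct, RCLike.inner_apply, conj_trivial, mul_comm]

lemma clm_emb (A : Matrix (Fin p) (Fin p) ℝ) (v : Fin p → ℝ) :
    Matrix.toEuclideanCLM (𝕜 := ℝ) A (emb v) = emb (A *ᵥ v) := by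
  simp [emb]

lemma norm_sq_eq (y : EuclideanSpace ℝ (Fin p)) : ‖y‖ ^ 2 = ∑ j, (y j) ^ 2 := by
  rw [EuclideanSpace.norm_eq, Real.sq_sqrt (by positivity)]
  simp [Real.norm_eq_abs, sq_abs]

lemma qf_le_spec (A : Matrix (Fin p) (Fin p) ℝ) (v : Fin p → ℝ) (hv : ∑ j, v j ^ 2 = 1) :
    v ⬝ᵥ (A *ᵥ v) ≤ spec A := by
  have hn : ‖emb v‖ = 1 := by
    have h := norm_sq_eq (emb v)
    have : ∑ j, (emb v) j ^ 2 = 1 := hv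
    rw [this] at h
    nlinarith [norm_nonneg (emb v)]
  calc v ⬝ᵥ (A *ᵥ v) = @inner ℝ _ _ (emb v) (Matrix.toEuclideanCLM (𝕜 := ℝ) A (emb v)) := by
        rw [clm_emb, inner_emb]
    _ ≤ ‖emb v‖ * ‖Matrix.toEuclideanCLM (𝕜 := ℝ) A (emb v)‖ := real_inner_le_norm _ _
    _ ≤ ‖emb v‖ * (spec A * ‖emb v‖) := by
        gcongr
        exact (Matrix.toEuclideanCLM (𝕜 := ℝ) A).le_opNorm _
    _ = spec A := by rw [hn]; ring

lemma exists_unit_qf (hp : 0 < p) {A : Matrix (Fin p) (Fin p) ℝ} (hA : A.PosSemidef) :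
    ∃ v : Fin p → ℝ, (∑ j, v j ^ 2 = 1) ∧ v ⬝ᵥ (A *ᵥ v) = spec A := by
  haveI : Nonempty (Fin p) := ⟨⟨0, hp⟩⟩
  classical
  set T := Matrix.toEuclideanCLM (𝕜 := ℝ) A with hT
  set b := hA.1.eigenvectorBasis with hb
  set lam := hA.1.eigenvalues with hlam
  obtain ⟨i₀, hi₀⟩ := Finite.exists_max lam
  have hnn : ∀ i, 0 ≤ lam i := hA.eigenvalues_nonneg
  have hTb : ∀ i, T (b i) = lam i • (b i) := by
    intro i
    have h1 := hA.1.mulVec_eigenvectorBasis i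
    apply (WithLp.equiv 2 (Fin p → ℝ)).injective
    simpa [emb, hT] using h1
  -- self adjoint
  have hsa : ContinuousLinearMap.adjoint T = T := by
    rw [← ContinuousLinearMap.star_eq_adjoint, hT, ← map_star]
    congr 1
    exact hA.1
  have hrepr : ∀ (w : EuclideanSpace ℝ (Fin p)) i, b.repr (T w) i = lam i * b.repr w i := by
    intro w i
    rw [b.repr_apply_apply, b.repr_apply_apply, ← hsa,
      ContinuousLinearMap.adjoint_inner_right, hTb i, real_inner_smul_left]
  have hbound : spec A ≤ lam i₀ := by
    refine ContinuousLinearMap.opNorm_le_bound _ (hnn i₀) fun w => ?_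
    have h1 : ‖T w‖ ^ 2 ≤ (lam i₀) ^ 2 * ‖w‖ ^ 2 := by
      rw [← b.repr.norm_map (T w), ← b.repr.norm_map w, norm_sq_eq, norm_sq_eq,
        Finset.mul_sum]
      refine Finset.sum_le_sum fun i _ => ?_
      rw [hrepr w i, mul_pow]
      have : lam i ^ 2 ≤ lam i₀ ^ 2 := by nlinarith [hnn i, hi₀ i]
      nlinarith [sq_nonneg (b.repr w i)]
    have h2 : ‖T w‖ ≤ lam i₀ * ‖w‖ := by
      nlinarith [norm_nonneg (T w), norm_nonneg w, mul_nonneg (hnn i₀) (norm_nonneg w)]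
    exact h2
  refine ⟨⇑(b i₀), ?_, ?_⟩
  · have h := norm_sq_eq (b i₀)
    rw [b.orthonormal.1 i₀] at h
    simpa using h.symm
  · have hmv := hA.1.mulVec_eigenvectorBasis i₀
    rw [hmv, dotProduct_smul]
    have hunit : (⇑(b i₀) : Fin p → ℝ) ⬝ᵥ ⇑(b i₀) = 1 := by
      have h := norm_sq_eq (b i₀)
      rw [b.orthonormal.1 i₀] at h
      simp only [one_pow] at h
      simp [dotProduct, ← pow_two, ← h]
    rw [smul_eq_mul, hunit, mul_one]
    refine le_antisymm ?_ hbound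
    have := qf_le_spec A (⇑(b i₀)) (by
      have h := norm_sq_eq (b i₀)
      rw [b.orthonormal.1 i₀] at h
      simpa using h.symm)
    rw [hmv, dotProduct_smul, smul_eq_mul, hunit, mul_one] at this
    exact this


lemma spec_nonneg (A : Matrix (Fin p) (Fin p) ℝ) : 0 ≤ spec A := norm_nonneg _

lemma spec_smul (t : ℝ) (A : Matrix (Fin p) (Fin p) ℝ) : spec (t • A) = |t| * spec A := by
  unfold spec
  rw [_root_.map_smul, ← Real.norm_eq_abs]
  exact norm_smul t (Matrix.toEuclideanCLM (𝕜 := ℝ) A)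

lemma spec_add_le (A B : Matrix (Fin p) (Fin p) ℝ) : spec (A + B) ≤ spec A + spec B := by
  simp only [spec, map_add]
  exact norm_add_le _ _

lemma spec_one (hp : 0 < p) : spec (1 : Matrix (Fin p) (Fin p) ℝ) = 1 := by
  haveI : Nonempty (Fin p) := ⟨⟨0, hp⟩⟩
  haveI : Nontrivial (EuclideanSpace ℝ (Fin p)) := by
    refine nontrivial_of_ne (EuclideanSpace.single ⟨0, hp⟩ (1 : ℝ)) 0 fun h => ?_
    have := congrArg (fun z => ‖z‖) h
    simp [EuclideanSpace.norm_single] at this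
  unfold spec
  rw [_root_.map_one, ContinuousLinearMap.one_def, ContinuousLinearMap.norm_id]

lemma smul_posSemidef {A : Matrix (Fin p) (Fin p) ℝ} (hA : A.PosSemidef) {t : ℝ} (ht : 0 ≤ t) :
    (t • A).PosSemidef := by
  refine Matrix.PosSemidef.of_dotProduct_mulVec_nonneg ?_ ?_
  · show (t • A)ᴴ = t • A
    rw [conjTranspose_smul, star_trivial, hA.1]
  · intro v
    rw [smul_mulVec, dotProduct_smul]
    exact mul_nonneg ht (hA.dotProduct_mulVec_nonneg v)

lemma sum_posSemidef {ι : Type*} (s : Finset ι) (f : ι → Matrix (Fin p) (Fin p) ℝ)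
    (h : ∀ i ∈ s, (f i).PosSemidef) : (∑ i ∈ s, f i).PosSemidef :=
  Finset.sum_induction f _ (fun _ _ ha hb => ha.add hb) Matrix.PosSemidef.zero h

lemma vecMulVec_posSemidef (u : Fin p → ℝ) : (vecMulVec u u).PosSemidef := by
  refine Matrix.PosSemidef.of_dotProduct_mulVec_nonneg ?_ ?_
  · ext i j
    simp [vecMulVec_apply, conjTranspose_apply, mul_comm]
  · intro v
    have hmv : vecMulVec u u *ᵥ v = (u ⬝ᵥ v) • u := by
      ext i
      simp [vecMulVec_apply, mulVec, dotProduct, Finset.mul_sum, mul_comm, mul_assoc, mul_left_comm]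
    rw [hmv, dotProduct_smul]
    have : star v ⬝ᵥ u = u ⬝ᵥ v := by
      simp [dotProduct, mul_comm]
    rw [smul_eq_mul, this]
    exact mul_self_nonneg _

lemma cs_aux {M : Matrix (Fin p) (Fin p) ℝ} (hM : M.PosDef) (a b : Fin p → ℝ) :
    (a ⬝ᵥ (M *ᵥ b)) ^ 2 ≤ (a ⬝ᵥ (M *ᵥ a)) * (b ⬝ᵥ (M *ᵥ b)) := by
  letI instN : NormedAddCommGroup (Fin p → ℝ) := Matrix.toNormedAddCommGroup M hM
  letI instS : SeminormedAddCommGroup (Fin p → ℝ) := M.toSeminormedAddCommGroup hM.posSemidef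
  letI instI : @InnerProductSpace ℝ (Fin p → ℝ) _ instS := Matrix.toInnerProductSpace M hM.posSemidef
  have h := @real_inner_mul_inner_self_le (Fin p → ℝ) instS instI a b
  have e1 : ∀ u v : Fin p → ℝ, (@inner ℝ _ _ u v : ℝ) = (star u) ⬝ᵥ (M *ᵥ v) := fun u v => dotProduct_comm _ _
  rw [e1, e1, e1, star_trivial, star_trivial] at h
  nlinarith [h]
lemma spec_mono (hp : 0 < p) {A B : Matrix (Fin p) (Fin p) ℝ}
    (hA : A.PosSemidef) (hBA : (B - A).PosSemidef) : spec A ≤ spec B := by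
  obtain ⟨v, hv, hq⟩ := exists_unit_qf hp hA
  have h0 := hBA.dotProduct_mulVec_nonneg v
  rw [star_trivial, sub_mulVec, dotProduct_sub] at h0
  have h1 : v ⬝ᵥ (A *ᵥ v) ≤ v ⬝ᵥ (B *ᵥ v) := by linarith
  calc spec A = v ⬝ᵥ (A *ᵥ v) := hq.symm
    _ ≤ v ⬝ᵥ (B *ᵥ v) := h1
    _ ≤ spec B := qf_le_spec B v hv

lemma spec_add_smul_one (hp : 0 < p) {A : Matrix (Fin p) (Fin p) ℝ}
    (hA : A.PosSemidef) {c : ℝ} (hc : 0 ≤ c) : spec (A + c • 1) = spec A + c := by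
  refine le_antisymm ?_ ?_
  · calc spec (A + c • 1) ≤ spec A + spec (c • (1 : Matrix (Fin p) (Fin p) ℝ)) := spec_add_le _ _
      _ = spec A + c := by rw [spec_smul, spec_one hp, abs_of_nonneg hc, mul_one]
  · obtain ⟨v, hv, hq⟩ := exists_unit_qf hp hA
    have hvv : v ⬝ᵥ v = 1 := by
      rw [← hv]
      simp [dotProduct, pow_two]
    have key : v ⬝ᵥ ((A + c • 1) *ᵥ v) = spec A + c := by
      rw [add_mulVec, dotProduct_add, hq, smul_mulVec, one_mulVec, dotProduct_smul,
        smul_eq_mul, hvv, mul_one]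
    rw [← key]
    exact qf_le_spec _ v hv


end Aux

theorem stmt9 {p n : ℕ} (hp : 0 < p) (hn : 0 < n)
    (x : Fin n → Fin p → ℝ) (hunit : ∀ i, ∑ j, x i j ^ 2 = 1)
    (α : ℝ) (hα : 0 < α)
    (Sig : Matrix (Fin p) (Fin p) ℝ) (hSig : Sig.PosDef)
    (hfix : Sig = (1 / (1 + α)) • (((p : ℝ) / n) •
        ∑ i, (1 / (x i ⬝ᵥ (Sig⁻¹ *ᵥ x i))) • Matrix.vecMulVec (x i) (x i)) +
      (α / (1 + α)) • (1 : Matrix (Fin p) (Fin p) ℝ))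
    (C : ℝ) (hC : C = ((p : ℝ) / n) * spec (∑ i, Matrix.vecMulVec (x i) (x i)))
    (hCα : C < 1 + α) :
    spec Sig ≤ (α / (1 + α)) * (1 / (1 - C / (1 + α))) ∧
    spec (Sig - (α / (1 + α)) • (1 : Matrix (Fin p) (Fin p) ℝ)) = spec Sig - α / (1 + α) ∧
    spec (Sig - (α / (1 + α)) • (1 : Matrix (Fin p) (Fin p) ℝ))
      ≤ (C / (1 + α)) * (α / (1 + α)) * (1 / (1 - C / (1 + α))) := by
  classical
  have h1α : (0:ℝ) < 1 + α := by linarith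
  set c : ℝ := α / (1 + α) with hcdef
  have hc0 : 0 < c := div_pos hα h1α
  -- nonzero data vectors
  have hxne : ∀ i, x i ≠ 0 := by
    intro i h
    have := hunit i
    rw [h] at this
    simp at this
  have hSiginv : Sig⁻¹.PosDef := hSig.inv
  have hden : ∀ i, 0 < x i ⬝ᵥ (Sig⁻¹ *ᵥ x i) := by
    intro i
    have := hSiginv.dotProduct_mulVec_pos (hxne i)
    rwa [star_trivial] at this
  set w : Fin n → ℝ := fun i => 1 / (x i ⬝ᵥ (Sig⁻¹ *ᵥ x i)) with hwdef
  have hw0 : ∀ i, 0 < w i := fun i => one_div_pos.mpr (hden i)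
  set M : Matrix (Fin p) (Fin p) ℝ := ∑ i, Matrix.vecMulVec (x i) (x i) with hMdef
  set S : Matrix (Fin p) (Fin p) ℝ := ∑ i, w i • Matrix.vecMulVec (x i) (x i) with hSdef
  have hSpsd : S.PosSemidef := sum_posSemidef _ _ fun i _ =>
    smul_posSemidef (vecMulVec_posSemidef (x i)) (hw0 i).le
  have hMpsd : M.PosSemidef := sum_posSemidef _ _ fun i _ => vecMulVec_posSemidef (x i)
  -- P
  have hkn : (0:ℝ) ≤ 1 / (1 + α) * ((p : ℝ) / n) := by positivity
  have hPform : Sig - c • (1 : Matrix (Fin p) (Fin p) ℝ) = (1 / (1 + α) * ((p : ℝ) / n)) • S := by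
    rw [hfix]
    rw [add_sub_cancel_right, smul_smul]
  have hPpsd : (Sig - c • (1 : Matrix (Fin p) (Fin p) ℝ)).PosSemidef := by
    rw [hPform]
    exact smul_posSemidef hSpsd hkn
  set P : Matrix (Fin p) (Fin p) ℝ := Sig - c • (1 : Matrix (Fin p) (Fin p) ℝ) with hPdef
  set s : ℝ := spec P with hsdef
  have hs0 : 0 ≤ s := spec_nonneg _
  -- spec Sig = s + c
  have hSig_eq : Sig = P + c • 1 := by rw [hPdef, sub_add_cancel]
  have hspecSig : spec Sig = s + c := by
    rw [hSig_eq, spec_add_smul_one hp hPpsd hc0.le]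
  have hSigpos : 0 < spec Sig := by rw [hspecSig]; linarith
  -- weights bounded by spec Sig
  have hwle : ∀ i, w i ≤ spec Sig := by
    intro i
    have hdet : IsUnit Sig.det := isUnit_iff_ne_zero.mpr (ne_of_gt hSig.det_pos)
    have hinvmul : Sig⁻¹ *ᵥ (Sig *ᵥ x i) = x i := by
      rw [mulVec_mulVec, Matrix.nonsing_inv_mul _ hdet, one_mulVec]
    have hcs := cs_aux hSiginv (x i) (Sig *ᵥ x i)
    rw [hinvmul] at hcs
    have hxx : x i ⬝ᵥ x i = 1 := by
      rw [← hunit i]; simp [dotProduct, pow_two]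
    rw [hxx] at hcs
    have hsym : (Sig *ᵥ x i) ⬝ᵥ x i = x i ⬝ᵥ (Sig *ᵥ x i) := dotProduct_comm _ _
    rw [hsym] at hcs
    have hqf : x i ⬝ᵥ (Sig *ᵥ x i) ≤ spec Sig := qf_le_spec Sig (x i) (hunit i)
    have h1 : 1 ≤ (x i ⬝ᵥ (Sig⁻¹ *ᵥ x i)) * spec Sig := by
      calc (1:ℝ) = 1 ^ 2 := by ring
        _ ≤ (x i ⬝ᵥ (Sig⁻¹ *ᵥ x i)) * (x i ⬝ᵥ (Sig *ᵥ x i)) := hcs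
        _ ≤ (x i ⬝ᵥ (Sig⁻¹ *ᵥ x i)) * spec Sig := by
            exact mul_le_mul_of_nonneg_left hqf (hden i).le
    rw [hwdef]
    rw [div_le_iff₀ (hden i)]
    linarith [h1]
  -- Loewner comparison
  have hcomp : ((spec Sig) • M - S).PosSemidef := by
    have : (spec Sig) • M - S = ∑ i, (spec Sig - w i) • Matrix.vecMulVec (x i) (x i) := by
      rw [hMdef, hSdef, Finset.smul_sum, ← Finset.sum_sub_distrib]
      exact Finset.sum_congr rfl fun i _ => (sub_smul _ _ _).symm
    rw [this]
    exact sum_posSemidef _ _ fun i _ =>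
      smul_posSemidef (vecMulVec_posSemidef (x i)) (by linarith [hwle i])
  have hSle : spec S ≤ spec Sig * spec M := by
    calc spec S ≤ spec ((spec Sig) • M) := spec_mono hp hSpsd hcomp
      _ = spec Sig * spec M := by rw [spec_smul, abs_of_nonneg hSigpos.le]
  -- the key inequality
  have hC0 : 0 ≤ C := by
    rw [hC]; exact mul_nonneg (by positivity) (spec_nonneg _)
  have hkey : s ≤ C / (1 + α) * (s + c) := by
    have h1 : s = (1 / (1 + α) * ((p : ℝ) / n)) * spec S := by
      rw [hsdef, hPform, spec_smul, abs_of_nonneg hkn]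
    calc s = (1 / (1 + α) * ((p : ℝ) / n)) * spec S := h1
      _ ≤ (1 / (1 + α) * ((p : ℝ) / n)) * (spec Sig * spec M) := by
          exact mul_le_mul_of_nonneg_left hSle hkn
      _ = C / (1 + α) * spec Sig := by rw [hC]; ring
      _ = C / (1 + α) * (s + c) := by rw [← hspecSig]
  have hr1 : C / (1 + α) < 1 := by rw [div_lt_one h1α]; exact hCα
  have hr0 : 0 ≤ C / (1 + α) := div_nonneg hC0 h1α.le
  have h1mr : 0 < 1 - C / (1 + α) := by linarith
  set r : ℝ := C / (1 + α) with hrdef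
  refine ⟨?_, ?_, ?_⟩
  · rw [hspecSig, mul_one_div, le_div_iff₀ h1mr]
    nlinarith [hkey]
  · rw [hspecSig]; ring
  · rw [mul_one_div, le_div_iff₀ h1mr]
    nlinarith [hkey]
end

section
/- Let F, F' be symmetric positive definite p×p matrices and x, y nonzero vectors in ℝ^p. Suppose λ_min(F) ≥ c_F > 0, λ_min(F') ≥ c_F, ‖F‖ ≤ 1/β, ‖F'‖ ≤ 1/β for some β > 0. Then |(xᵀFy)²/(xᵀFx)² − (xᵀF'y)²/(xᵀF'x)²| ≤ (2/(β c_F⁴))·(‖y‖⁴/‖x‖⁴)·‖F − F'‖ + (2/(β c_F²))·(‖y‖²/‖x‖²)·‖F − F'‖. -/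
open Matrix

open scoped BigOperators

noncomputable def enorm {p : ℕ} (x : Fin p → ℝ) : ℝ := Real.sqrt (∑ i, x i ^ 2)

lemma enorm_nonneg' {p : ℕ} (x : Fin p → ℝ) : 0 ≤ _root_.enorm x := Real.sqrt_nonneg _

lemma enorm_sq {p : ℕ} (x : Fin p → ℝ) : _root_.enorm x ^ 2 = ∑ i, x i ^ 2 :=
  Real.sq_sqrt (by positivity)

lemma enorm_pos_real {p : ℕ} {x : Fin p → ℝ} (hx : x ≠ 0) : 0 < _root_.enorm x := by
  rcases Function.ne_iff.mp hx with ⟨i, hi⟩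
  apply Real.sqrt_pos.mpr
  have : (0:ℝ) < x i ^ 2 := pow_two_pos_of_ne_zero hi
  calc (0:ℝ) < x i ^ 2 := this
    _ ≤ ∑ j, x j ^ 2 := Finset.single_le_sum (fun j _ => sq_nonneg (x j)) (Finset.mem_univ i)

lemma enorm_eq_norm {p : ℕ} (x : Fin p → ℝ) :
    _root_.enorm x = ‖(WithLp.equiv 2 (Fin p → ℝ)).symm x‖ := by
  rw [EuclideanSpace.norm_eq]
  simp [_root_.enorm, sq_abs]

lemma dot_le {p : ℕ} (A : Matrix (Fin p) (Fin p) ℝ) (x y : Fin p → ℝ) :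
    |x ⬝ᵥ (A *ᵥ y)| ≤ spec A * _root_.enorm x * _root_.enorm y := by
  have h1 : x ⬝ᵥ (A *ᵥ y) =
      (inner ℝ ((WithLp.equiv 2 (Fin p → ℝ)).symm x)
        (Matrix.toEuclideanCLM (𝕜 := ℝ) A ((WithLp.equiv 2 (Fin p → ℝ)).symm y)) : ℝ) := by
    rw [WithLp.equiv_symm_apply, Matrix.toEuclideanCLM_toLp]
    simp [PiLp.inner_apply, Matrix.toLin'_apply, dotProduct, RCLike.inner_apply, mul_comm]
  rw [h1]
  calc |(inner ℝ ((WithLp.equiv 2 (Fin p → ℝ)).symm x)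
        (Matrix.toEuclideanCLM (𝕜 := ℝ) A ((WithLp.equiv 2 (Fin p → ℝ)).symm y)) : ℝ)|
      ≤ ‖(WithLp.equiv 2 (Fin p → ℝ)).symm x‖ *
        ‖Matrix.toEuclideanCLM (𝕜 := ℝ) A ((WithLp.equiv 2 (Fin p → ℝ)).symm y)‖ :=
        abs_real_inner_le_norm _ _
    _ ≤ ‖(WithLp.equiv 2 (Fin p → ℝ)).symm x‖ *
        (spec A * ‖(WithLp.equiv 2 (Fin p → ℝ)).symm y‖) := by
        gcongr
        exact ContinuousLinearMap.le_opNorm _ _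
    _ = spec A * _root_.enorm x * _root_.enorm y := by rw [enorm_eq_norm, enorm_eq_norm]; ring

lemma dot_symm {p : ℕ} {F : Matrix (Fin p) (Fin p) ℝ} (h : F.IsHermitian) (x y : Fin p → ℝ) :
    x ⬝ᵥ (F *ᵥ y) = y ⬝ᵥ (F *ᵥ x) := by
  have hT : Fᵀ = F := by
    rw [← Matrix.conjTranspose_eq_transpose_of_trivial]; exact h
  rw [Matrix.dotProduct_mulVec, ← Matrix.mulVec_transpose, hT, dotProduct_comm]

lemma quad_lower {p : ℕ} {F : Matrix (Fin p) (Fin p) ℝ} (h : F.IsHermitian) {cF : ℝ}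
    (hmin : ∀ i, cF ≤ h.eigenvalues i) (v : Fin p → ℝ) :
    cF * _root_.enorm v ^ 2 ≤ v ⬝ᵥ (F *ᵥ v) := by
  classical
  rw [enorm_sq]
  set U : Matrix (Fin p) (Fin p) ℝ := (h.eigenvectorUnitary : Matrix (Fin p) (Fin p) ℝ) with hU
  have hstar : star U = Uᵀ := by
    rw [Matrix.star_eq_conjTranspose, Matrix.conjTranspose_eq_transpose_of_trivial]
  set w : Fin p → ℝ := Uᵀ *ᵥ v with hw
  have key : v ⬝ᵥ (F *ᵥ v) = ∑ i, h.eigenvalues i * w i ^ 2 := by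
    conv_lhs => rw [h.spectral_theorem, Unitary.conjStarAlgAut_apply]
    rw [← Matrix.mulVec_mulVec, ← Matrix.mulVec_mulVec, hstar,
      Matrix.dotProduct_mulVec (A := U), ← Matrix.mulVec_transpose]
    simp only [← hw]
    rw [RCLike.ofReal_real_eq_id]
    simp [dotProduct, Matrix.mulVec_diagonal]
    ring_nf
    apply Finset.sum_congr rfl
    intro i _
    ring
  have keyw : ∑ i, w i ^ 2 = ∑ i, v i ^ 2 := by
    have hUU : U * star U = 1 := Matrix.mem_unitaryGroup_iff.mp h.eigenvectorUnitary.2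
    have h2 : ∑ i, w i ^ 2 = w ⬝ᵥ w := by simp [dotProduct, sq]
    rw [h2, hw, Matrix.mulVec_transpose, ← Matrix.dotProduct_mulVec,
      Matrix.mulVec_vecMul, ← hstar, hUU]
    simp [dotProduct, sq]
  rw [key, ← keyw, Finset.mul_sum]
  apply Finset.sum_le_sum
  intro i _
  exact mul_le_mul_of_nonneg_right (hmin i) (sq_nonneg _)

lemma cs_dot {p : ℕ} {F : Matrix (Fin p) (Fin p) ℝ} (hF : F.PosDef) (x y : Fin p → ℝ) :
    (x ⬝ᵥ (F *ᵥ y)) ^ 2 ≤ (x ⬝ᵥ (F *ᵥ x)) * (y ⬝ᵥ (F *ᵥ y)) := by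
  have hq : ∀ t : ℝ, 0 ≤ (y ⬝ᵥ (F *ᵥ y)) * (t * t) + (2 * (x ⬝ᵥ (F *ᵥ y))) * t
      + (x ⬝ᵥ (F *ᵥ x)) := by
    intro t
    have h0 := hF.posSemidef.dotProduct_mulVec_nonneg (x + t • y)
    have hst : star (x + t • y) = x + t • y := by simp
    rw [hst] at h0
    have hexp : (x + t • y) ⬝ᵥ (F *ᵥ (x + t • y)) =
        (y ⬝ᵥ (F *ᵥ y)) * (t * t) + (2 * (x ⬝ᵥ (F *ᵥ y))) * t + (x ⬝ᵥ (F *ᵥ x)) := by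
      rw [Matrix.mulVec_add, Matrix.mulVec_smul, dotProduct_add,
        add_dotProduct, add_dotProduct, dotProduct_smul,
        smul_dotProduct, smul_dotProduct, dotProduct_smul,
        dot_symm hF.1 y x]
      simp only [smul_eq_mul]
      ring
    rw [hexp] at h0
    exact h0
  have hd := discrim_le_zero hq
  rw [discrim] at hd
  linarith [hd]

set_option maxHeartbeats 1000000 in
theorem stmt16 {p : ℕ} (F F' : Matrix (Fin p) (Fin p) ℝ) (hF : F.PosDef) (hF' : F'.PosDef)
    (x y : Fin p → ℝ) (hx : x ≠ 0) (hy : y ≠ 0)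
    (cF β : ℝ) (hcF : 0 < cF) (hβ : 0 < β)
    (hFmin : cF ≤ ⨅ i, hF.1.eigenvalues i) (hF'min : cF ≤ ⨅ i, hF'.1.eigenvalues i)
    (hFnorm : spec F ≤ 1 / β) (hF'norm : spec F' ≤ 1 / β) :
    |(x ⬝ᵥ (F *ᵥ y)) ^ 2 / (x ⬝ᵥ (F *ᵥ x)) ^ 2 -
        (x ⬝ᵥ (F' *ᵥ y)) ^ 2 / (x ⬝ᵥ (F' *ᵥ x)) ^ 2|
      ≤ (2 / (β * cF ^ 4)) * (_root_.enorm y ^ 4 / _root_.enorm x ^ 4) * spec (F - F') +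
        (2 / (β * cF ^ 2)) * (_root_.enorm y ^ 2 / _root_.enorm x ^ 2) * spec (F - F') := by
  rcases isEmpty_or_nonempty (Fin p) with hE | hNE
  · exact absurd (Subsingleton.elim x 0) hx
  have hFev : ∀ i, cF ≤ hF.1.eigenvalues i := fun i =>
    hFmin.trans (ciInf_le (Set.Finite.bddBelow (Set.finite_range _)) i)
  have hF'ev : ∀ i, cF ≤ hF'.1.eigenvalues i := fun i =>
    hF'min.trans (ciInf_le (Set.Finite.bddBelow (Set.finite_range _)) i)
  set X := _root_.enorm x with hXdef
  set Y := _root_.enorm y with hYdef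
  set d := spec (F - F') with hddef
  set a := x ⬝ᵥ (F *ᵥ y) with hadef
  set b := x ⬝ᵥ (F *ᵥ x) with hbdef
  set a' := x ⬝ᵥ (F' *ᵥ y) with ha'def
  set b' := x ⬝ᵥ (F' *ᵥ x) with hb'def
  set c := y ⬝ᵥ (F *ᵥ y) with hcdef
  set c' := y ⬝ᵥ (F' *ᵥ y) with hc'def
  have hX : 0 < X := enorm_pos_real hx
  have hY : 0 < Y := enorm_pos_real hy
  have hd0 : 0 ≤ d := norm_nonneg _
  have hb : cF * X ^ 2 ≤ b := quad_lower hF.1 hFev x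
  have hb' : cF * X ^ 2 ≤ b' := quad_lower hF'.1 hF'ev x
  have hc'low : cF * Y ^ 2 ≤ c' := quad_lower hF'.1 hF'ev y
  have hbpos : 0 < b := lt_of_lt_of_le (by positivity) hb
  have hb'pos : 0 < b' := lt_of_lt_of_le (by positivity) hb'
  have hcβ : c ≤ Y ^ 2 / β := by
    have h1 : c ≤ |c| := le_abs_self _
    have h2 := dot_le F y y
    rw [← hcdef] at h2
    have h3 : spec F * _root_.enorm y * _root_.enorm y ≤ 1 / β * Y * Y := by
      rw [← hYdef]
      have : (0:ℝ) ≤ Y := hY.le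
      gcongr
    calc c ≤ |c| := h1
      _ ≤ spec F * _root_.enorm y * _root_.enorm y := h2
      _ ≤ 1 / β * Y * Y := h3
      _ = Y ^ 2 / β := by ring
  have hc'β : c' ≤ Y ^ 2 / β := by
    have h1 : c' ≤ |c'| := le_abs_self _
    have h2 := dot_le F' y y
    rw [← hc'def] at h2
    have h3 : spec F' * _root_.enorm y * _root_.enorm y ≤ 1 / β * Y * Y := by
      rw [← hYdef]
      have : (0:ℝ) ≤ Y := hY.le
      gcongr
    calc c' ≤ |c'| := h1
      _ ≤ spec F' * _root_.enorm y * _root_.enorm y := h2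
      _ ≤ 1 / β * Y * Y := h3
      _ = Y ^ 2 / β := by ring
  have hcpos : 0 < c := lt_of_lt_of_le (by positivity) (quad_lower hF.1 hFev y)
  have hc'pos : 0 < c' := lt_of_lt_of_le (by positivity) hc'low
  have hCS : a ^ 2 ≤ b * c := cs_dot hF x y
  have hCS' : a' ^ 2 ≤ b' * c' := cs_dot hF' x y
  -- the auxiliary vector z
  set r' : ℝ := a' / b' with hr'def
  set z : Fin p → ℝ := y - r' • x with hzdef
  set Z := _root_.enorm z with hZdef
  have hZ0 : 0 ≤ Z := enorm_nonneg' _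
  set e := x ⬝ᵥ ((F - F') *ᵥ z) with hedef
  have he : |e| ≤ d * X * Z := dot_le (F - F') x z
  -- algebraic identities
  have hsymF : x ⬝ᵥ (F *ᵥ y) = y ⬝ᵥ (F *ᵥ x) := dot_symm hF.1 x y
  have hsymF' : x ⬝ᵥ (F' *ᵥ y) = y ⬝ᵥ (F' *ᵥ x) := dot_symm hF'.1 x y
  have hze : e = (a / b - a' / b') * b := by
    rw [hedef, hzdef, Matrix.sub_mulVec, Matrix.mulVec_sub, Matrix.mulVec_sub,
      Matrix.mulVec_smul, Matrix.mulVec_smul, dotProduct_sub,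
      dotProduct_sub, dotProduct_sub, dotProduct_smul,
      dotProduct_smul]
    simp only [smul_eq_mul, ← hadef, ← hbdef, ← ha'def, ← hb'def, hr'def]
    field_simp
    ring
  have hzz : z ⬝ᵥ (F' *ᵥ z) = c' - r' ^ 2 * b' := by
    have hr'a' : r' * b' = a' := by rw [hr'def]; field_simp
    have hsym2 : a' = y ⬝ᵥ (F' *ᵥ x) := by rw [ha'def]; exact hsymF'
    rw [hzdef, Matrix.mulVec_sub, Matrix.mulVec_smul, dotProduct_sub,
      sub_dotProduct, sub_dotProduct, dotProduct_smul,
      smul_dotProduct, smul_dotProduct, dotProduct_smul]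
    simp only [smul_eq_mul, ← ha'def, ← hb'def, ← hc'def, ← hsym2]
    linear_combination 2 * r' * hr'a'
  have hZc : cF * Z ^ 2 ≤ c' - r' ^ 2 * b' := by
    rw [← hzz]; exact quad_lower hF'.1 hF'ev z
  clear_value X Y d a b a' b' c c' r' z Z e
  -- key claims
  have hZsq : Z ^ 2 ≤ c' / cF := by
    rw [le_div_iff₀ hcF]
    have h0 : 0 ≤ r' ^ 2 * b' := mul_nonneg (sq_nonneg r') hb'pos.le
    linarith
  have claim1 : |a / b| * Z ≤ Y ^ 2 / (β * cF * X) := by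
    have hsq : (|a / b| * Z) ^ 2 ≤ (Y ^ 2 / (β * cF * X)) ^ 2 := by
      have e1 : (|a / b| * Z) ^ 2 = a ^ 2 / b ^ 2 * Z ^ 2 := by
        rw [mul_pow, sq_abs, div_pow]
      rw [e1]
      have h1 : a ^ 2 / b ^ 2 ≤ c / b := by
        rw [div_le_div_iff₀ (by positivity) hbpos]
        calc a ^ 2 * b ≤ (b * c) * b := mul_le_mul_of_nonneg_right hCS hbpos.le
          _ = c * b ^ 2 := by ring
      have h2 : a ^ 2 / b ^ 2 * Z ^ 2 ≤ (c / b) * (c' / cF) :=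
        mul_le_mul h1 hZsq (sq_nonneg _) (by positivity)
      have h3 : (c / b) * (c' / cF) ≤ ((Y ^ 2 / β) / (cF * X ^ 2)) * ((Y ^ 2 / β) / cF) := by
        apply mul_le_mul
        · exact div_le_div₀ (by positivity) hcβ (by positivity) hb
        · exact div_le_div₀ (by positivity) hc'β hcF le_rfl
        · positivity
        · positivity
      have h4 : ((Y ^ 2 / β) / (cF * X ^ 2)) * ((Y ^ 2 / β) / cF)
          = (Y ^ 2 / (β * cF * X)) ^ 2 := by
        field_simp
      linarith
    have h5 := Real.sqrt_le_sqrt hsq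
    rwa [Real.sqrt_sq (by positivity), Real.sqrt_sq (by positivity)] at h5
  have claim2 : |a' / b'| * Z ≤ Y ^ 2 / (2 * (β * cF * X)) := by
    have hsq : (|a' / b'| * Z) ^ 2 ≤ (Y ^ 2 / (2 * (β * cF * X))) ^ 2 := by
      have e1 : (|a' / b'| * Z) ^ 2 = r' ^ 2 * Z ^ 2 := by
        rw [mul_pow, sq_abs, hr'def, div_pow]
      have h1 : r' ^ 2 * Z ^ 2 ≤ r' ^ 2 * ((c' - r' ^ 2 * b') / cF) := by
        apply mul_le_mul_of_nonneg_left _ (sq_nonneg _)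
        rw [le_div_iff₀ hcF]
        linarith [hZc]
      have h2 : r' ^ 2 * ((c' - r' ^ 2 * b') / cF) ≤ c' ^ 2 / (4 * b' * cF) := by
        have hin : 4 * b' * (r' ^ 2 * (c' - r' ^ 2 * b')) ≤ c' ^ 2 :=
          by linarith [sq_nonneg (c' - 2 * b' * r' ^ 2)]
        have h4b' : (0:ℝ) < 4 * b' := by linarith
        have h2' : r' ^ 2 * (c' - r' ^ 2 * b') ≤ c' ^ 2 / (4 * b') := by
          rw [le_div_iff₀ h4b']
          linarith [hin]
        have e1 : r' ^ 2 * ((c' - r' ^ 2 * b') / cF) = (r' ^ 2 * (c' - r' ^ 2 * b')) / cF := by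
          ring
        have e2 : c' ^ 2 / (4 * b' * cF) = (c' ^ 2 / (4 * b')) / cF := by
          rw [div_div]
        rw [e1, e2]
        gcongr
      have h3 : c' ^ 2 / (4 * b' * cF) ≤ (Y ^ 2 / β) ^ 2 / (4 * (cF * X ^ 2) * cF) := by
        apply div_le_div₀ (by positivity) _ (by positivity) _
        · exact pow_le_pow_left₀ hc'pos.le hc'β 2
        · calc 4 * (cF * X ^ 2) * cF = 4 * ((cF * X ^ 2) * cF) := by ring
            _ ≤ 4 * (b' * cF) := by
                have h9 := mul_le_mul_of_nonneg_right hb' hcF.le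
                linarith
            _ = 4 * b' * cF := by ring
      have h4 : (Y ^ 2 / β) ^ 2 / (4 * (cF * X ^ 2) * cF)
          = (Y ^ 2 / (2 * (β * cF * X))) ^ 2 := by
        field_simp
        ring
      rw [e1]
      linarith
    have h5 := Real.sqrt_le_sqrt hsq
    rwa [Real.sqrt_sq (by positivity), Real.sqrt_sq (by positivity)] at h5
  -- main chain
  have key1 : a ^ 2 / b ^ 2 - a' ^ 2 / b' ^ 2 = (a / b + a' / b') * e / b := by
    rw [hze]
    field_simp
    ring
  rw [key1]
  have habs : |(a / b + a' / b') * e / b| ≤ (|a / b| + |a' / b'|) * (d * X * Z) / b := by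
    rw [abs_div, abs_mul, abs_of_pos hbpos]
    apply div_le_div_of_nonneg_right _ hbpos.le
    apply mul_le_mul (abs_add_le _ _) he (abs_nonneg _) (by positivity)
  have hsum : (|a / b| + |a' / b'|) * (d * X * Z) / b
      ≤ (3 / 2 * (Y ^ 2 / (β * cF * X))) * (d * X) / (cF * X ^ 2) := by
    have hnum : (|a / b| + |a' / b'|) * (d * X * Z) ≤ (3 / 2 * (Y ^ 2 / (β * cF * X))) * (d * X) := by
      have expand : (|a / b| + |a' / b'|) * (d * X * Z)
          = (|a / b| * Z + |a' / b'| * Z) * (d * X) := by ring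
      rw [expand]
      apply mul_le_mul_of_nonneg_right _ (by positivity)
      calc |a / b| * Z + |a' / b'| * Z
          ≤ Y ^ 2 / (β * cF * X) + Y ^ 2 / (2 * (β * cF * X)) := add_le_add claim1 claim2
        _ = 3 / 2 * (Y ^ 2 / (β * cF * X)) := by field_simp; ring
    calc (|a / b| + |a' / b'|) * (d * X * Z) / b
        ≤ (3 / 2 * (Y ^ 2 / (β * cF * X))) * (d * X) / b :=
          div_le_div_of_nonneg_right hnum hbpos.le |>.trans_eq rfl
      _ ≤ (3 / 2 * (Y ^ 2 / (β * cF * X))) * (d * X) / (cF * X ^ 2) := by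
          apply div_le_div_of_nonneg_left (by positivity) (by positivity) hb
  have hfinal : (3 / 2 * (Y ^ 2 / (β * cF * X))) * (d * X) / (cF * X ^ 2)
      ≤ (2 / (β * cF ^ 4)) * (Y ^ 4 / X ^ 4) * d +
        (2 / (β * cF ^ 2)) * (Y ^ 2 / X ^ 2) * d := by
    have h1 : (3 / 2 * (Y ^ 2 / (β * cF * X))) * (d * X) / (cF * X ^ 2)
        = 3 / 2 * (Y ^ 2 / X ^ 2) * d / (β * cF ^ 2) := by
      field_simp
    have h2 : 3 / 2 * (Y ^ 2 / X ^ 2) * d / (β * cF ^ 2)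
        ≤ (2 / (β * cF ^ 2)) * (Y ^ 2 / X ^ 2) * d := by
      have e1 : 3 / 2 * (Y ^ 2 / X ^ 2) * d / (β * cF ^ 2)
          = (3 / 2 * ((Y ^ 2 / X ^ 2) * d)) / (β * cF ^ 2) := by ring
      have e2 : (2 / (β * cF ^ 2)) * (Y ^ 2 / X ^ 2) * d
          = (2 * ((Y ^ 2 / X ^ 2) * d)) / (β * cF ^ 2) := by ring
      rw [e1, e2]
      have ht : (0:ℝ) ≤ (Y ^ 2 / X ^ 2) * d := by positivity
      gcongr
      linarith
    have h3 : (0:ℝ) ≤ (2 / (β * cF ^ 4)) * (Y ^ 4 / X ^ 4) * d := by positivity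
    linarith
  calc |(a / b + a' / b') * e / b| ≤ (|a / b| + |a' / b'|) * (d * X * Z) / b := habs
    _ ≤ (3 / 2 * (Y ^ 2 / (β * cF * X))) * (d * X) / (cF * X ^ 2) := hsum
    _ ≤ _ := hfinal
end
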